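/- A graph G of order n ≥ 6 is (n−4)-factor-critical if and only if G is claw-free and has minimum degree at least n − 3. -/

import Mathlib

open SimpleGraph

variable {V : Type*}

/-- `G` has a perfect matching covering exactly the vertex set `A`
(i.e. the graph obtained from `G` by deleting the vertices outside `A` has a perfect matching). -/
def HasPMOn (G : SimpleGraph V) (A : Set V) : Prop :=
  ∃ M : G.Subgraph, M.verts = A ∧ M.IsMatching

/-- `G` is `k`-factor-critical: deleting any `k` vertices leaves a graph with a perfect matching. -/
def FactorCritical [Fintype V] (G : SimpleGraph V) (k : ℕ) : Prop :=
  ∀ S : Finset V, S.card = k → HasPMOn G ((↑S : Set V)ᶜ)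

/-- `G` is minimally `k`-factor-critical. -/
def MinFactorCritical [Fintype V] (G : SimpleGraph V) (k : ℕ) : Prop :=
  FactorCritical G k ∧ ∀ u v : V, G.Adj u v → ¬ FactorCritical (G.deleteEdges {s(u,v)}) k

/-- The number of odd connected components of a graph. -/
noncomputable def oddComponents {W : Type*} (G : SimpleGraph W) : ℕ :=
  Nat.card {c : G.ConnectedComponent // Odd (Nat.card c.supp)}

lemma myFinsetCardFour [DecidableEq V] {s : Finset V} (h : s.card = 4) :
    ∃ a b c d : V, a ≠ b ∧ a ≠ c ∧ a ≠ d ∧ b ≠ c ∧ b ≠ d ∧ c ≠ d ∧ s = {a, b, c, d} := by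
  obtain ⟨a, t, hat, hs, ht⟩ := Finset.card_eq_succ.mp h
  obtain ⟨b, c, d, hbc, hbd, hcd, htt⟩ := Finset.card_eq_three.mp ht
  subst hs; subst htt
  simp only [Finset.mem_insert, Finset.mem_singleton, not_or] at hat
  exact ⟨a, b, c, d, hat.1, hat.2.1, hat.2.2, hbc, hbd, hcd, rfl⟩

lemma myCardFourFinset {p q r s : V} [DecidableEq V] (hpq : p ≠ q) (hpr : p ≠ r) (hps : p ≠ s)
    (hqr : q ≠ r) (hqs : q ≠ s) (hrs : r ≠ s) : ({p, q, r, s} : Finset V).card = 4 := by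
  rw [Finset.card_insert_of_notMem (by simp [hpq, hpr, hps]),
    Finset.card_insert_of_notMem (by simp [hqr, hqs]),
    Finset.card_insert_of_notMem (by simp [hrs]), Finset.card_singleton]

lemma myHasPMOnPair {G : SimpleGraph V} {p q r s : V} (h1 : G.Adj p q) (h2 : G.Adj r s)
    (hpr : p ≠ r) (hps : p ≠ s) (hqr : q ≠ r) (hqs : q ≠ s) :
    HasPMOn G {p, q, r, s} := by
  refine ⟨G.subgraphOfAdj h1 ⊔ G.subgraphOfAdj h2, ?_, ?_⟩
  · rw [Subgraph.verts_sup, subgraphOfAdj_verts, subgraphOfAdj_verts]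
    ext x; simp; tauto
  · apply Subgraph.IsMatching.sup (Subgraph.IsMatching.subgraphOfAdj h1)
      (Subgraph.IsMatching.subgraphOfAdj h2)
    rw [(Subgraph.IsMatching.subgraphOfAdj h1).support_eq_verts,
      (Subgraph.IsMatching.subgraphOfAdj h2).support_eq_verts,
      subgraphOfAdj_verts, subgraphOfAdj_verts]
    rw [Set.disjoint_left]
    rintro x (rfl | rfl) <;> simp [hpr, hps, hqr, hqs]

lemma myPartner {G : SimpleGraph V} {M : G.Subgraph} (hM : M.IsMatching)
    {v a b c : V} (hverts : M.verts = {v, a, b, c}) :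
    ∃ w, (w = a ∨ w = b ∨ w = c) ∧ M.Adj v w := by
  have hv : v ∈ M.verts := by rw [hverts]; simp
  obtain ⟨w, hvw, -⟩ := hM hv
  have hwm : w ∈ M.verts := hvw.snd_mem
  rw [hverts] at hwm
  have hwv : w ≠ v := hvw.ne.symm
  rcases hwm with h | h | h | h
  · exact absurd h hwv
  · exact ⟨w, Or.inl h, hvw⟩
  · exact ⟨w, Or.inr (Or.inl h), hvw⟩
  · exact ⟨w, Or.inr (Or.inr h), hvw⟩

lemma myMatchedOther {G : SimpleGraph V} {M : G.Subgraph} (hM : M.IsMatching)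
    {v a b c : V} (hverts : M.verts = {v, a, b, c}) (hva : M.Adj v a)
    (hbv : b ≠ v) (hba : b ≠ a) (hbc : b ≠ c) (hcv : c ≠ v) (hca : c ≠ a) :
    G.Adj b c := by
  have hb : b ∈ M.verts := by rw [hverts]; simp
  obtain ⟨u, hbu, -⟩ := hM hb
  have hum : u ∈ M.verts := hbu.snd_mem
  rw [hverts] at hum
  have huv : u ≠ v := by
    rintro rfl
    have hv : u ∈ M.verts := by rw [hverts]; simp
    exact hba ((hM hv).unique hbu.symm hva)
  have hua : u ≠ a := by
    rintro rfl
    have ha : u ∈ M.verts := by rw [hverts]; simp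
    exact hbv ((hM ha).unique hbu.symm hva.symm)
  have hub : u ≠ b := hbu.ne.symm
  rcases hum with h | h | h | h
  · exact absurd h huv
  · exact absurd h hua
  · exact absurd h hub
  · exact h ▸ hbu.adj_sub

lemma myPairingAB {G : SimpleGraph V}
    (hL1 : ∀ p q r s : V, p ≠ q → p ≠ r → p ≠ s → q ≠ r → q ≠ s → r ≠ s →
      G.Adj p q ∨ G.Adj p r ∨ G.Adj p s)
    (hL2 : ∀ p q r s : V, q ≠ r → q ≠ s → r ≠ s →
      G.Adj p q → G.Adj p r → G.Adj p s → G.Adj q r ∨ G.Adj q s ∨ G.Adj r s)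
    {a b c d : V} (hab2 : a ≠ b) (hac : a ≠ c) (had : a ≠ d) (hbc : b ≠ c) (hbd : b ≠ d)
    (hcd : c ≠ d) (hab : G.Adj a b) :
    (G.Adj a b ∧ G.Adj c d) ∨ (G.Adj a c ∧ G.Adj b d) ∨ (G.Adj a d ∧ G.Adj b c) := by
  rcases hL1 c a b d hac.symm hbc.symm hcd hab2 had hbd with hca | hcb | hcd2
  · rcases hL1 d a b c had.symm hbd.symm hcd.symm hab2 hac hbc with hda | hdb | hdc
    · rcases hL2 a b c d hbc hbd hcd hab hca.symm hda.symm with h | h | h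
      · exact Or.inr (Or.inr ⟨hda.symm, h⟩)
      · exact Or.inr (Or.inl ⟨hca.symm, h⟩)
      · exact Or.inl ⟨hab, h⟩
    · exact Or.inr (Or.inl ⟨hca.symm, hdb.symm⟩)
    · exact Or.inl ⟨hab, hdc.symm⟩
  · rcases hL1 d a b c had.symm hbd.symm hcd.symm hab2 hac hbc with hda | hdb | hdc
    · exact Or.inr (Or.inr ⟨hda.symm, hcb.symm⟩)
    · rcases hL2 b a c d hac had hcd hab.symm hcb.symm hdb.symm with h | h | h
      · exact Or.inr (Or.inl ⟨h, hdb.symm⟩)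
      · exact Or.inr (Or.inr ⟨h, hcb.symm⟩)
      · exact Or.inl ⟨hab, h⟩
    · exact Or.inl ⟨hab, hdc.symm⟩
  · exact Or.inl ⟨hab, hcd2⟩

lemma myPairing {G : SimpleGraph V}
    (hL1 : ∀ p q r s : V, p ≠ q → p ≠ r → p ≠ s → q ≠ r → q ≠ s → r ≠ s →
      G.Adj p q ∨ G.Adj p r ∨ G.Adj p s)
    (hL2 : ∀ p q r s : V, q ≠ r → q ≠ s → r ≠ s →
      G.Adj p q → G.Adj p r → G.Adj p s → G.Adj q r ∨ G.Adj q s ∨ G.Adj r s)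
    {a b c d : V} (hab : a ≠ b) (hac : a ≠ c) (had : a ≠ d) (hbc : b ≠ c) (hbd : b ≠ d)
    (hcd : c ≠ d) :
    (G.Adj a b ∧ G.Adj c d) ∨ (G.Adj a c ∧ G.Adj b d) ∨ (G.Adj a d ∧ G.Adj b c) := by
  rcases hL1 a b c d hab hac had hbc hbd hcd with h | h | h
  · exact myPairingAB hL1 hL2 hab hac had hbc hbd hcd h
  · rcases myPairingAB hL1 hL2 hac hab had hbc.symm hcd hbd h with ⟨h1, h2⟩ | ⟨h1, h2⟩ | ⟨h1, h2⟩
    · exact Or.inr (Or.inl ⟨h1, h2⟩)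
    · exact Or.inl ⟨h1, h2⟩
    · exact Or.inr (Or.inr ⟨h1, h2.symm⟩)
  · rcases myPairingAB hL1 hL2 had hab hac hbd.symm hcd.symm hbc h with ⟨h1, h2⟩ | ⟨h1, h2⟩ | ⟨h1, h2⟩
    · exact Or.inr (Or.inr ⟨h1, h2⟩)
    · exact Or.inl ⟨h1, h2.symm⟩
    · exact Or.inr (Or.inl ⟨h1, h2.symm⟩)

noncomputable def myClawEmb {G : SimpleGraph V} {p q r s : V}
    (hqr : q ≠ r) (hqs : q ≠ s) (hrs : r ≠ s)
    (h1 : G.Adj p q) (h2 : G.Adj p r) (h3 : G.Adj p s)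
    (n1 : ¬ G.Adj q r) (n2 : ¬ G.Adj q s) (n3 : ¬ G.Adj r s) :
    (completeBipartiteGraph (Fin 1) (Fin 3)) ↪g G := by
  have n1' : ¬ G.Adj r q := fun h => n1 h.symm
  have n2' : ¬ G.Adj s q := fun h => n2 h.symm
  have n3' : ¬ G.Adj s r := fun h => n3 h.symm
  refine ⟨⟨Sum.elim (fun _ => p) ![q, r, s], ?_⟩, ?_⟩
  · rintro (x | x) (y | y) hxy
    · exact congrArg Sum.inl (Subsingleton.elim x y)
    · exfalso
      fin_cases y <;>
        simp only [Sum.elim_inl, Sum.elim_inr, Matrix.cons_val_zero, Matrix.cons_val_one,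
          Matrix.head_cons, Matrix.cons_val_two, Matrix.tail_cons] at hxy
      · exact h1.ne hxy
      · exact h2.ne hxy
      · exact h3.ne hxy
    · exfalso
      fin_cases x <;>
        simp only [Sum.elim_inl, Sum.elim_inr, Matrix.cons_val_zero, Matrix.cons_val_one,
          Matrix.head_cons, Matrix.cons_val_two, Matrix.tail_cons] at hxy
      · exact h1.ne hxy.symm
      · exact h2.ne hxy.symm
      · exact h3.ne hxy.symm
    · congr 1
      fin_cases x <;> fin_cases y <;>
        simp only [Sum.elim_inr, Matrix.cons_val_zero, Matrix.cons_val_one, Matrix.head_cons,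
          Matrix.cons_val_two, Matrix.tail_cons] at hxy <;>
        first
          | rfl
          | exact absurd hxy hqr | exact absurd hxy hqs | exact absurd hxy hrs
          | exact absurd hxy.symm hqr | exact absurd hxy.symm hqs | exact absurd hxy.symm hrs
  · intro u w
    show G.Adj (Sum.elim (fun _ => p) ![q, r, s] u) (Sum.elim (fun _ => p) ![q, r, s] w) ↔ _
    rcases u with x | x <;> rcases w with y | y
    · simp
    · fin_cases y <;> simp [h1, h2, h3]
    · fin_cases x <;> simp [h1.symm, h2.symm, h3.symm]
    · fin_cases x <;> fin_cases y <;> simp [n1, n2, n3, n1', n2', n3']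

theorem factorCritical_n_sub_four_iff [Fintype V] (G : SimpleGraph V) [DecidableRel G.Adj]
    (n : ℕ) (hn : Fintype.card V = n) (h6 : 6 ≤ n) :
    FactorCritical G (n - 4) ↔
      (IsEmpty ((completeBipartiteGraph (Fin 1) (Fin 3)) ↪g G) ∧ n - 3 ≤ G.minDegree) := by
  classical
  have hne : Nonempty V := Fintype.card_pos_iff.mp (by omega)
  constructor
  · intro hFC
    constructor
    · constructor
      intro f
      set v := f (Sum.inl 0) with hvdef
      set a := f (Sum.inr 0) with hadef
      set b := f (Sum.inr 1) with hbdef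
      set c := f (Sum.inr 2) with hcdef
      have hva : G.Adj v a := f.map_rel_iff.mpr (by simp)
      have hvb : G.Adj v b := f.map_rel_iff.mpr (by simp)
      have hvc : G.Adj v c := f.map_rel_iff.mpr (by simp)
      have hnab : ¬ G.Adj a b := fun h => by simpa using f.map_rel_iff.mp h
      have hnac : ¬ G.Adj a c := fun h => by simpa using f.map_rel_iff.mp h
      have hnbc : ¬ G.Adj b c := fun h => by simpa using f.map_rel_iff.mp h
      have dva : v ≠ a := hva.ne
      have dvb : v ≠ b := hvb.ne
      have dvc : v ≠ c := hvc.ne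
      have dab : a ≠ b := fun h => absurd (f.injective h) (by decide)
      have dac : a ≠ c := fun h => absurd (f.injective h) (by decide)
      have dbc : b ≠ c := fun h => absurd (f.injective h) (by decide)
      have hcard : (Finset.univ \ ({v, a, b, c} : Finset V)).card = n - 4 := by
        rw [Finset.card_sdiff_of_subset (Finset.subset_univ _),
          myCardFourFinset dva dvb dvc dab dac dbc, Finset.card_univ, hn]
      obtain ⟨M, hMv, hMm⟩ := hFC _ hcard
      have hverts : M.verts = ({v, a, b, c} : Set V) := by
        rw [hMv, Finset.coe_sdiff, Finset.coe_univ]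
        ext x; simp; tauto
      obtain ⟨w, hw, hvw⟩ := myPartner hMm hverts
      rcases hw with rfl | rfl | rfl
      · exact hnbc (myMatchedOther hMm hverts hvw dvb.symm dab.symm dbc dvc.symm dac.symm)
      · have hverts' : M.verts = ({v, b, a, c} : Set V) := by
          rw [hverts]; ext x; simp; tauto
        exact hnac (myMatchedOther hMm hverts' hvw dva.symm dab dac dvc.symm dbc.symm)
      · have hverts' : M.verts = ({v, c, a, b} : Set V) := by
          rw [hverts]; ext x; simp; tauto
        exact hnab (myMatchedOther hMm hverts' hvw dva.symm dac dab dvb.symm dbc)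
    · apply SimpleGraph.le_minDegree_of_forall_le_degree
      intro v
      by_contra hd
      push_neg at hd
      have hnb : v ∉ G.neighborFinset v := by simp
      have hdeg : (G.neighborFinset v).card = G.degree v := rfl
      have h3 : 3 ≤ (Finset.univ \ insert v (G.neighborFinset v)).card := by
        rw [Finset.card_sdiff_of_subset (Finset.subset_univ _), Finset.card_insert_of_notMem hnb,
          hdeg, Finset.card_univ, hn]
        omega
      obtain ⟨t, hts, ht3⟩ := Finset.exists_subset_card_eq h3
      obtain ⟨a, b, c, dab, dac, dbc, rfl⟩ := Finset.card_eq_three.mp ht3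
      have hprop : ∀ x ∈ ({a, b, c} : Finset V), x ≠ v ∧ ¬ G.Adj v x := by
        intro x hx
        have hx' := hts hx
        simp only [Finset.mem_sdiff, Finset.mem_univ, true_and, Finset.mem_insert,
          SimpleGraph.mem_neighborFinset, not_or] at hx'
        exact hx'
      obtain ⟨dav, hva⟩ := hprop a (by simp)
      obtain ⟨dbv, hvb⟩ := hprop b (by simp)
      obtain ⟨dcv, hvc⟩ := hprop c (by simp)
      have hcard : (Finset.univ \ ({v, a, b, c} : Finset V)).card = n - 4 := by
        rw [Finset.card_sdiff_of_subset (Finset.subset_univ _),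
          myCardFourFinset dav.symm dbv.symm dcv.symm dab dac dbc, Finset.card_univ, hn]
      obtain ⟨M, hMv, hMm⟩ := hFC _ hcard
      have hverts : M.verts = ({v, a, b, c} : Set V) := by
        rw [hMv, Finset.coe_sdiff, Finset.coe_univ]
        ext x; simp; tauto
      obtain ⟨w, hw, hvw⟩ := myPartner hMm hverts
      rcases hw with rfl | rfl | rfl
      · exact hva hvw.adj_sub
      · exact hvb hvw.adj_sub
      · exact hvc hvw.adj_sub
  · rintro ⟨hclaw, hdeg⟩
    have hL1 : ∀ p q r s : V, p ≠ q → p ≠ r → p ≠ s → q ≠ r → q ≠ s → r ≠ s →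
        G.Adj p q ∨ G.Adj p r ∨ G.Adj p s := by
      intro p q r s hpq hpr hps hqr hqs hrs
      by_contra h
      push_neg at h
      obtain ⟨h1, h2, h3⟩ := h
      have hsub : G.neighborFinset p ⊆ Finset.univ \ {p, q, r, s} := by
        intro u hu
        rw [SimpleGraph.mem_neighborFinset] at hu
        simp only [Finset.mem_sdiff, Finset.mem_univ, true_and, Finset.mem_insert,
          Finset.mem_singleton, not_or]
        refine ⟨?_, ?_, ?_, ?_⟩ <;> rintro rfl
        · exact G.irrefl hu
        · exact h1 hu
        · exact h2 hu
        · exact h3 hu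
      have hle := Finset.card_le_card hsub
      rw [Finset.card_sdiff_of_subset (Finset.subset_univ _), myCardFourFinset hpq hpr hps hqr hqs hrs,
        Finset.card_univ, hn] at hle
      have h1' := G.minDegree_le_degree p
      have hdd : (G.neighborFinset p).card = G.degree p := rfl
      omega
    have hL2 : ∀ p q r s : V, q ≠ r → q ≠ s → r ≠ s →
        G.Adj p q → G.Adj p r → G.Adj p s → G.Adj q r ∨ G.Adj q s ∨ G.Adj r s := by
      intro p q r s hqr hqs hrs h1 h2 h3
      by_contra h
      push_neg at h
      obtain ⟨n1, n2, n3⟩ := h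
      exact hclaw.false (myClawEmb hqr hqs hrs h1 h2 h3 n1 n2 n3)
    intro S hS
    have hc4 : Sᶜ.card = 4 := by
      rw [Finset.card_compl, hS, hn]; omega
    obtain ⟨a, b, c, d, hab, hac, had, hbc, hbd, hcd, hSc⟩ := myFinsetCardFour hc4
    have hA : ((↑S : Set V))ᶜ = ({a, b, c, d} : Set V) := by
      rw [← Finset.coe_compl, hSc]; simp
    rw [HasPMOn] at *
    rw [hA]
    rcases myPairing hL1 hL2 hab hac had hbc hbd hcd with ⟨h1, h2⟩ | ⟨h1, h2⟩ | ⟨h1, h2⟩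
    · exact myHasPMOnPair h1 h2 hac had hbc hbd
    · have hset : ({a, b, c, d} : Set V) = {a, c, b, d} := by ext x; simp; tauto
      rw [hset]
      exact myHasPMOnPair h1 h2 hab had hbc.symm hcd
    · have hset : ({a, b, c, d} : Set V) = {a, d, b, c} := by ext x; simp; tauto
      rw [hset]
      exact myHasPMOnPair h1 h2 hab hac hbd.symm hcd.symm
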